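/- (Correctness of the decoding of finite-field product-matrix MSR codes via the decomposition scheme) Let F be a field, α ≥ 1, k = α + 1, d = 2α, n ≥ k, L ≥ 1. Let Φ be an n×α matrix over F such that any α rows of Φ are linearly independent, and let λ_1, …, λ_n ∈ F be pairwise distinct. Let S and T be symmetric α×α matrices with entries in F^L, and for each node i define the stored row Y^i = Φ^i S + λ_i Φ^i T ∈ (F^L)^α. Then for any k distinct node indices i_1, …, i_k, the map from the pair of symmetric matrices (S, T) to the retrieved data (Y^{i_1}, …, Y^{i_k}) is injective; i.e., all B = α(α+1) message sequences are uniquely recoverable from any k nodes. -/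

import Mathlib

open scoped BigOperators
open Matrix

private lemma vec_zero_of_det {F : Type*} [Field F] {α : ℕ}
    (M : Matrix (Fin α) (Fin α) F) (hdet : M.det ≠ 0) (x : Fin α → F)
    (hx : M.mulVec x = 0) : x = 0 := by
  have hM : IsUnit M.det := isUnit_iff_ne_zero.mpr hdet
  have := congrArg (M⁻¹.mulVec) hx
  rwa [Matrix.mulVec_mulVec, Matrix.nonsing_inv_mul _ hM, Matrix.one_mulVec,
    Matrix.mulVec_zero] at this

private lemma offdiag_kill {F : Type*} [Field F] {n α : ℕ}
    (Φ : Matrix (Fin n) (Fin α) F)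
    (hΦ : ∀ ρ : Fin α → Fin n, Function.Injective ρ → (Φ.submatrix ρ id).det ≠ 0)
    (idx : Fin (α + 1) → Fin n) (hidx : Function.Injective idx)
    (C : Matrix (Fin α) (Fin α) F)
    (h : ∀ v w : Fin (α + 1), v ≠ w →
      ∑ j : Fin α, Φ (idx w) j * (∑ u : Fin α, C j u * Φ (idx v) u) = 0) :
    C = 0 := by
  have step1 : ∀ v : Fin (α + 1), ∀ j : Fin α,
      (∑ u : Fin α, C j u * Φ (idx v) u) = 0 := by
    intro v j
    have hinj : Function.Injective (idx ∘ v.succAbove) :=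
      hidx.comp (Fin.succAbove_right_injective)
    have hdet := hΦ _ hinj
    have hx : (Φ.submatrix (idx ∘ v.succAbove) id).mulVec
        (fun j => ∑ u : Fin α, C j u * Φ (idx v) u) = 0 := by
      funext i
      have := h v (v.succAbove i) (Fin.succAbove_ne v i).symm
      simpa [Matrix.mulVec, dotProduct] using this
    have := vec_zero_of_det _ hdet _ hx
    exact congrFun this j
  have step2 : ∀ j : Fin α, C j = 0 := by
    intro j
    have hinj : Function.Injective (idx ∘ Fin.castSucc) :=
      hidx.comp (Fin.castSucc_injective α)
    have hdet := hΦ _ hinj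
    have hx : (Φ.submatrix (idx ∘ Fin.castSucc) id).mulVec (C j) = 0 := by
      funext i
      have := step1 (Fin.castSucc i) j
      simpa [Matrix.mulVec, dotProduct, mul_comm] using this
    exact vec_zero_of_det _ hdet _ hx
  ext j u
  exact congrFun (step2 j) u

private lemma key_scalar {F : Type*} [Field F] {n α : ℕ}
    (Φ : Matrix (Fin n) (Fin α) F)
    (hΦ : ∀ ρ : Fin α → Fin n, Function.Injective ρ → (Φ.submatrix ρ id).det ≠ 0)
    (lam : Fin n → F) (hlam : Function.Injective lam)
    (A B : Matrix (Fin α) (Fin α) F) (hA : A.IsSymm) (hB : B.IsSymm)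
    (idx : Fin (α + 1) → Fin n) (hidx : Function.Injective idx)
    (h : ∀ (v : Fin (α + 1)) (u : Fin α),
      (∑ j : Fin α, Φ (idx v) j * A j u)
        + lam (idx v) * ∑ j : Fin α, Φ (idx v) j * B j u = 0) :
    A = 0 ∧ B = 0 := by
  set Ψ : Matrix (Fin (α + 1)) (Fin α) F := Φ.submatrix idx id with hΨ
  set P : Matrix (Fin (α + 1)) (Fin (α + 1)) F := Ψ * A * Ψᵀ with hP
  set Q : Matrix (Fin (α + 1)) (Fin (α + 1)) F := Ψ * B * Ψᵀ with hQ
  have hPsym : Pᵀ = P := by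
    rw [hP, Matrix.transpose_mul, Matrix.transpose_mul, Matrix.transpose_transpose,
      hA.eq, Matrix.mul_assoc]
  have hQsym : Qᵀ = Q := by
    rw [hQ, Matrix.transpose_mul, Matrix.transpose_mul, Matrix.transpose_transpose,
      hB.eq, Matrix.mul_assoc]
  have hPQ : ∀ v w : Fin (α + 1), P v w + lam (idx v) * Q v w = 0 := by
    intro v w
    have hexp : P v w + lam (idx v) * Q v w
        = ∑ u : Fin α, ((∑ j : Fin α, Φ (idx v) j * A j u)
            + lam (idx v) * ∑ j : Fin α, Φ (idx v) j * B j u) * Φ (idx w) u := by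
      simp only [hP, hQ, Matrix.mul_apply, Matrix.transpose_apply, hΨ,
        Matrix.submatrix_apply, id_eq]
      rw [Finset.mul_sum, ← Finset.sum_add_distrib]
      exact Finset.sum_congr rfl fun u _ => by ring
    rw [hexp]
    exact Finset.sum_eq_zero fun u _ => by rw [h v u, zero_mul]
  have hlamne : ∀ v w : Fin (α + 1), v ≠ w → lam (idx v) ≠ lam (idx w) := by
    intro v w hvw hc
    exact hvw (hidx (hlam hc))
  have hQ0 : ∀ v w : Fin (α + 1), v ≠ w → Q v w = 0 := by
    intro v w hvw
    have h1 := hPQ v w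
    have h2 := hPQ w v
    have hps : P v w = P w v := congrFun (congrFun hPsym w) v
    have hqs : Q v w = Q w v := congrFun (congrFun hQsym w) v
    rw [← hps, ← hqs] at h2
    have hsub : (lam (idx v) - lam (idx w)) * Q v w = 0 := by
      linear_combination h1 - h2
    rcases mul_eq_zero.mp hsub with h3 | h3
    · exact absurd (sub_eq_zero.mp h3) (hlamne v w hvw)
    · exact h3
  have hP0 : ∀ v w : Fin (α + 1), v ≠ w → P v w = 0 := by
    intro v w hvw
    have h1 := hPQ v w
    rw [hQ0 v w hvw, mul_zero, add_zero] at h1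
    exact h1
  have entry : ∀ (C : Matrix (Fin α) (Fin α) F) (v w : Fin (α + 1)),
      (Ψ * C * Ψᵀ) w v = ∑ j : Fin α, Φ (idx w) j * (∑ u : Fin α, C j u * Φ (idx v) u) := by
    intro C v w
    rw [Matrix.mul_assoc]
    simp [Matrix.mul_apply, Matrix.transpose_apply, hΨ]
  constructor
  · refine offdiag_kill Φ hΦ idx hidx A fun v w hvw => ?_
    rw [← entry]
    exact hP0 w v (Ne.symm hvw)
  · refine offdiag_kill Φ hΦ idx hidx B fun v w hvw => ?_
    rw [← entry]
    exact hQ0 w v (Ne.symm hvw)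

/-- Correctness of the decoding of finite-field product-matrix MSR codes
(`d = 2α`, `k = α + 1`) via the decomposition scheme: if any `α` rows of `Φ` are
linearly independent (every `α × α` submatrix from distinct rows is invertible) and
the `λ_i` are pairwise distinct, then for any `k` distinct node indices the pair of
symmetric matrices `(S, T)` is uniquely determined by the stored rows
`Y^i = Φ^i S + λ_i Φ^i T`, whose `u`-th entry is
`∑_j Φ i j • S j u + λ i • ∑_j Φ i j • T j u ∈ F^L`. -/
theorem stmt16 (F : Type*) [Field F] (n α L : ℕ)
    (hα : 1 ≤ α) (hn : α + 1 ≤ n) (hL : 1 ≤ L)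
    (Φ : Matrix (Fin n) (Fin α) F)
    (hΦ : ∀ ρ : Fin α → Fin n, Function.Injective ρ → (Φ.submatrix ρ id).det ≠ 0)
    (lam : Fin n → F) (hlam : Function.Injective lam)
    (S S' T T' : Matrix (Fin α) (Fin α) (Fin L → F))
    (hS : S.IsSymm) (hS' : S'.IsSymm) (hT : T.IsSymm) (hT' : T'.IsSymm)
    (idx : Fin (α + 1) → Fin n) (hidx : Function.Injective idx)
    (heq : ∀ (v : Fin (α + 1)) (u : Fin α),
      ((∑ j : Fin α, Φ (idx v) j • S j u)
          + lam (idx v) • ∑ j : Fin α, Φ (idx v) j • T j u)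
        = (∑ j : Fin α, Φ (idx v) j • S' j u)
            + lam (idx v) • ∑ j : Fin α, Φ (idx v) j • T' j u) :
    S = S' ∧ T = T' := by
  have main : ∀ l : Fin L,
      (fun j u => S j u l - S' j u l) = (0 : Matrix (Fin α) (Fin α) F)
      ∧ (fun j u => T j u l - T' j u l) = (0 : Matrix (Fin α) (Fin α) F) := by
    intro l
    refine key_scalar Φ hΦ lam hlam
      (fun j u => S j u l - S' j u l) (fun j u => T j u l - T' j u l) ?_ ?_ idx hidx ?_
    · ext i j
      have h1 : S j i = S i j := congrFun (congrFun hS.eq i) j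
      have h2 : S' j i = S' i j := congrFun (congrFun hS'.eq i) j
      show S j i l - S' j i l = S i j l - S' i j l
      rw [h1, h2]
    · ext i j
      have h1 : T j i = T i j := congrFun (congrFun hT.eq i) j
      have h2 : T' j i = T' i j := congrFun (congrFun hT'.eq i) j
      show T j i l - T' j i l = T i j l - T' i j l
      rw [h1, h2]
    · intro v u
      have h1 := congrFun (heq v u) l
      simp only [Pi.add_apply, Pi.smul_apply, Finset.sum_apply, smul_eq_mul] at h1
      simp only [mul_sub, Finset.sum_sub_distrib]
      linear_combination h1
  constructor
  · ext j u l
    have := congrFun (congrFun (main l).1 j) u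
    simpa [sub_eq_zero] using this
  · ext j u l
    have := congrFun (congrFun (main l).2 j) u
    simpa [sub_eq_zero] using this
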